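/- Let ℓ ≥ 2 and d ≥ 3 be integers and set b = ⌊(d-2)/ℓ⌋. Then equality C((b+1)ℓ+1, d-1) + C((b+2)ℓ, d-1) = C(ℓ+d-1, d-1) + d·C((b+1)ℓ, d-1) holds if and only if ℓ divides d-1. -/
import Mathlib

/-- Auxiliary: telescoping lower bound `C(a,s+1) + t·C(a,s) ≤ C(a+t,s+1)`. -/
lemma stmt1_aux (a s : ℕ) : ∀ t : ℕ, a.choose (s+1) + t * a.choose s ≤ (a + t).choose (s+1)
  | 0 => by simp
  | (t+1) => by
      have ih := stmt1_aux a s t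
      have hmono : a.choose s ≤ (a+t).choose s := Nat.choose_le_choose s (Nat.le_add_right a t)
      have h1 : (a + (t+1)).choose (s+1) = (a+t).choose s + (a+t).choose (s+1) := by
        rw [show a + (t+1) = (a+t)+1 by ring]
        exact Nat.choose_succ_succ _ _
      have h2 : a.choose (s+1) + (t+1) * a.choose s
          = (a.choose (s+1) + t * a.choose s) + a.choose s := by ring
      rw [h1, h2]
      omega

/-- For integers `ℓ ≥ 2`, `d ≥ 3` and `b = ⌊(d-2)/ℓ⌋`, equality
`C((b+1)ℓ+1, d-1) + C((b+2)ℓ, d-1) = C(ℓ+d-1, d-1) + d·C((b+1)ℓ, d-1)` holds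
if and only if `ℓ ∣ d-1`. -/
theorem stmt1 (ℓ d b : ℕ) (hl : 2 ≤ ℓ) (hd : 3 ≤ d) (hb : b = (d - 2) / ℓ) :
    (Nat.choose ((b + 1) * ℓ + 1) (d - 1) + Nat.choose ((b + 2) * ℓ) (d - 1) =
      Nat.choose (ℓ + d - 1) (d - 1) + d * Nat.choose ((b + 1) * ℓ) (d - 1)) ↔
      ℓ ∣ (d - 1) := by
  obtain ⟨k, rfl⟩ : ∃ k, d = k + 3 := ⟨d - 3, by omega⟩
  have e1 : k + 3 - 1 = k + 2 := rfl
  have e2 : ℓ + (k + 3) - 1 = ℓ + (k + 2) := by omega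
  have e3 : (b + 2) * ℓ = (b + 1) * ℓ + ℓ := by ring
  rw [e1, e2, e3]
  have e4 : k + 3 - 2 = k + 1 := rfl
  rw [e4] at hb
  -- set up division data
  set r := (k + 1) % ℓ with hr
  have hdm : ℓ * ((k+1)/ℓ) + r = k + 1 := Nat.div_add_mod (k+1) ℓ
  have hrlt : r < ℓ := Nat.mod_lt _ (by omega)
  have hn0 : (b + 1) * ℓ + r = k + 1 + ℓ := by
    rw [hb]
    calc ((k+1)/ℓ + 1) * ℓ + r = (ℓ * ((k+1)/ℓ) + r) + ℓ := by ring
    _ = k + 1 + ℓ := by rw [hdm]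
  set n := (b + 1) * ℓ with hndef
  -- divisibility criterion
  have hdvd : ℓ ∣ (k + 2) ↔ r + 1 = ℓ := by
    constructor
    · intro hdv
      have h3 : ℓ ∣ ℓ * ((k+1)/ℓ) := Dvd.intro _ rfl
      have h2 : ℓ ∣ r + 1 := by
        have h4 : r + 1 = (k + 2) - ℓ * ((k+1)/ℓ) := by omega
        rw [h4]
        exact Nat.dvd_sub hdv h3
      have := Nat.le_of_dvd (by omega) h2
      omega
    · intro hre
      have : k + 2 = ℓ * ((k+1)/ℓ + 1) := by
        have : ℓ * ((k+1)/ℓ + 1) = ℓ * ((k+1)/ℓ) + ℓ := by ring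
        omega
      exact ⟨_, this⟩
  rcases Nat.lt_or_ge (r + 1) ℓ with hcase | hcase
  · -- ℓ does not divide k+2; strict inequality
    have hnd : ¬ ℓ ∣ (k + 2) := by rw [hdvd]; omega
    obtain ⟨t, ht⟩ : ∃ t, n = k + 3 + t := ⟨n - (k + 3), by omega⟩
    refine iff_of_false ?_ hnd
    intro heq
    -- derive a contradiction from strict inequality
    have h1 : n + ℓ = (ℓ + (k + 2)) + (t + 1) := by omega
    have h2 : (ℓ + (k+2)).choose (k+2) + (t+1) * (ℓ + (k+2)).choose (k+1)
        ≤ (n + ℓ).choose (k+2) := by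
      rw [h1]; exact stmt1_aux (ℓ + (k+2)) (k+1) (t+1)
    have h3 : (n + 1).choose (k+2) = n.choose (k+1) + n.choose (k+2) :=
      Nat.choose_succ_succ n (k+1)
    have h4 : n.choose (k+2) * (k+2) = n.choose (k+1) * (t + 2) := by
      have := Nat.choose_succ_right_eq n (k+1)
      rw [this]
      congr 1
      omega
    have h5 : n.choose (k+1) < (ℓ + (k+2)).choose (k+1) := by
      have hpos : 0 < n.choose k := Nat.choose_pos (by omega)
      have hstep : (n+1).choose (k+1) = n.choose k + n.choose (k+1) :=
        Nat.choose_succ_succ n k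
      have hle : (n+1).choose (k+1) ≤ (ℓ + (k+2)).choose (k+1) :=
        Nat.choose_le_choose _ (by omega)
      omega
    have h7 : (k+3) * n.choose (k+2)
        = n.choose (k+2) + n.choose (k+1) + (t+1) * n.choose (k+1) := by
      calc (k+3) * n.choose (k+2) = n.choose (k+2) * (k+2) + n.choose (k+2) := by ring
      _ = n.choose (k+1) * (t+2) + n.choose (k+2) := by rw [h4]
      _ = n.choose (k+2) + n.choose (k+1) + (t+1) * n.choose (k+1) := by ring
    have h6 : (t+1) * n.choose (k+1) < (t+1) * (ℓ + (k+2)).choose (k+1) :=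
      mul_lt_mul_of_pos_left h5 (by omega)
    rw [h7] at heq
    omega
  · -- ℓ divides k+2; equality
    have hre : r + 1 = ℓ := by omega
    have hnk : n = k + 2 := by omega
    rw [hnk]
    have c1 : (k + 2 + 1).choose (k + 2) = k + 3 := Nat.choose_succ_self_right _
    have c2 : (k + 2).choose (k + 2) = 1 := Nat.choose_self _
    have c3 : (k + 2 + ℓ).choose (k + 2) = (ℓ + (k + 2)).choose (k + 2) := by
      rw [add_comm]
    rw [c1, c2, c3]
    exact iff_of_true (by omega) (hdvd.mpr hre)
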